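/- Under the same hypotheses as the two-node Robin case, with the grids overlapping at three nodes instead, the contraction factor acquires an extra multiplicative factor r₋/r₊, i.e. ρ = [(a₂ - c₂ r₋)(c₁ - a₁ r₊⁻¹)] / [(a₁ r₊⁻² + (b₁-s) r₊⁻¹ + a₁ r₊⁻¹)(c₂ r₋ + (b₂-s) r₋ + c₂ r₋²)] · (r₋/r₊) = r₋/r₊. Consequently, if |r₋| < 1 < |r₊| then |ρ| < 1. -/

import Mathlib

/-- Robin transmission condition with three overlapping nodes: the contraction
factor equals `r₋ / r₊`, hence has modulus `< 1`. -/
theorem stmt_5 (a₁ b₁ c₁ a₂ b₂ c₂ s rp rm : ℂ)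
    (ha₁ : a₁ ≠ 0) (ha₂ : a₂ ≠ 0) (hc₁ : c₁ ≠ 0) (hc₂ : c₂ ≠ 0)
    (hrp : c₁ * rp ^ 2 + (b₁ - s) * rp + a₁ = 0) (hrp1 : 1 < ‖rp‖)
    (hrm : c₂ * rm ^ 2 + (b₂ - s) * rm + a₂ = 0) (hrm1 : ‖rm‖ < 1)
    (hrm0 : rm ≠ 0)
    (h1 : a₂ ≠ c₂ * rm) (h2 : c₁ ≠ a₁ * rp⁻¹) :
    ((a₂ - c₂ * rm) * (c₁ - a₁ * rp⁻¹)) /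
        ((a₁ * rp⁻¹ ^ 2 + (b₁ - s) * rp⁻¹ + a₁ * rp⁻¹) *
          (c₂ * rm + (b₂ - s) * rm + c₂ * rm ^ 2)) * (rm / rp) = rm / rp ∧
    ‖(((a₂ - c₂ * rm) * (c₁ - a₁ * rp⁻¹)) /
        ((a₁ * rp⁻¹ ^ 2 + (b₁ - s) * rp⁻¹ + a₁ * rp⁻¹) *
          (c₂ * rm + (b₂ - s) * rm + c₂ * rm ^ 2)) * (rm / rp))‖ < 1 := by
  have hrp0 : rp ≠ 0 := by
    intro h
    simp [h] at hrp1
    linarith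
  have hd1 : a₁ * rp⁻¹ ^ 2 + (b₁ - s) * rp⁻¹ + a₁ * rp⁻¹ = -(c₁ - a₁ * rp⁻¹) := by
    field_simp
    linear_combination hrp
  have hd2 : c₂ * rm + (b₂ - s) * rm + c₂ * rm ^ 2 = -(a₂ - c₂ * rm) := by
    linear_combination hrm
  have hN1 : a₂ - c₂ * rm ≠ 0 := sub_ne_zero.mpr h1
  have hN2 : c₁ - a₁ * rp⁻¹ ≠ 0 := sub_ne_zero.mpr h2
  have key : ((a₂ - c₂ * rm) * (c₁ - a₁ * rp⁻¹)) /
        ((a₁ * rp⁻¹ ^ 2 + (b₁ - s) * rp⁻¹ + a₁ * rp⁻¹) *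
          (c₂ * rm + (b₂ - s) * rm + c₂ * rm ^ 2)) = 1 := by
    rw [hd1, hd2]
    rw [neg_mul_neg]
    rw [mul_comm (c₁ - a₁ * rp⁻¹)]
    exact div_self (mul_ne_zero hN1 hN2)
  refine ⟨by rw [key, one_mul], ?_⟩
  rw [key, one_mul, norm_div, div_lt_one (by linarith)]
  linarith
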